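/- Let (p_j)_{j≥0} be a log-concave sequence of positive reals (p_j² ≥ p_{j-1} p_{j+1} for all j ≥ 1) such that f(z) = ∑ p_j z^j is entire with lim_{r→∞} ln f(r)/(ln r)² = β ∈ (0,∞). Then liminf_{j→∞} (ln p_j)/j² ≥ -1/(4β). -/

import Mathlib

open Filter

private lemma telescopeA (q : ℕ → ℝ)
    (hanti : Antitone fun m => q (m + 1) - q m) :
    ∀ i k : ℕ, (k : ℝ) * (q (i + k + 1) - q (i + k)) ≤ q (i + k) - q i := by
  intro i k
  induction k with
  | zero => simp
  | succ k ih =>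
    have h1 : q (i + k + 1 + 1) - q (i + k + 1) ≤ q (i + k + 1) - q (i + k) :=
      hanti (Nat.le_succ _)
    have hk : (0 : ℝ) ≤ (k : ℝ) := Nat.cast_nonneg k
    have h2 : i + (k + 1) = i + k + 1 := by ring
    rw [h2]
    push_cast
    nlinarith [ih, h1]

private lemma telescopeB (q : ℕ → ℝ)
    (hanti : Antitone fun m => q (m + 1) - q m) :
    ∀ i k : ℕ, q (i + k) - q i ≤ (k : ℝ) * (q (i + 1) - q i) := by
  intro i k
  induction k with
  | zero => simp
  | succ k ih =>
    have h1 : q (i + k + 1) - q (i + k) ≤ q (i + 1) - q i :=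
      hanti (Nat.le_add_right _ _)
    have h2 : i + (k + 1) = i + k + 1 := by ring
    rw [h2]
    push_cast
    linarith

private lemma quad_bound (c u x : ℝ) (hc : 0 < c) : -x ^ 2 / (4 * c) ≤ c * u ^ 2 - x * u := by
  rw [div_le_iff₀ (by linarith : (0:ℝ) < 4 * c)]
  nlinarith [sq_nonneg (2 * c * u - x)]

/-- The sum is at most twice the maximal term, at radius `exp (s - log 2)`. -/
private lemma sum_le_twice_max (p : ℕ → ℝ) (hp : ∀ j, 0 < p j) (j : ℕ) (s : ℝ)
    (hsum : Summable fun i : ℕ => p i * Real.exp (s - Real.log 2) ^ i)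
    (hmax : ∀ i : ℕ, Real.log (p i) + i * s ≤ Real.log (p j) + j * s) :
    (∑' i : ℕ, p i * Real.exp (s - Real.log 2) ^ i)
      ≤ Real.exp (Real.log (p j) + j * s + Real.log 2) := by
  have hterm : ∀ i : ℕ, p i * Real.exp (s - Real.log 2) ^ i
      = Real.exp (Real.log (p i) + i * s) * (1 / 2 : ℝ) ^ i := by
    intro i
    have h2 : ((1 : ℝ) / 2) ^ i = Real.exp ((i : ℝ) * Real.log (1 / 2)) := by
      rw [Real.exp_nat_mul, Real.exp_log (by norm_num : (0:ℝ) < 1/2)]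
    have h3 : Real.log ((1 : ℝ) / 2) = -Real.log 2 := by
      rw [one_div, Real.log_inv]
    rw [h2, h3, ← Real.exp_nat_mul, ← Real.exp_add]
    nth_rewrite 1 [← Real.exp_log (hp i)]
    rw [← Real.exp_add]
    ring_nf
  have hle : ∀ i : ℕ, p i * Real.exp (s - Real.log 2) ^ i
      ≤ Real.exp (Real.log (p j) + j * s) * (1 / 2 : ℝ) ^ i := by
    intro i
    rw [hterm i]
    exact mul_le_mul_of_nonneg_right (Real.exp_le_exp.2 (hmax i)) (by positivity)
  have hsum2 : Summable fun i : ℕ => Real.exp (Real.log (p j) + j * s) * (1 / 2 : ℝ) ^ i :=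
    (summable_geometric_of_lt_one (by norm_num) (by norm_num)).mul_left _
  calc (∑' i : ℕ, p i * Real.exp (s - Real.log 2) ^ i)
      ≤ ∑' i : ℕ, Real.exp (Real.log (p j) + j * s) * (1 / 2 : ℝ) ^ i :=
        Summable.tsum_le_tsum hle hsum hsum2
    _ = Real.exp (Real.log (p j) + j * s) * (1 - 1 / 2 : ℝ)⁻¹ := by
        rw [tsum_mul_left, tsum_geometric_of_lt_one (by norm_num) (by norm_num)]
    _ = Real.exp (Real.log (p j) + j * s + Real.log 2) := by
        rw [Real.exp_add (Real.log (p j) + j * s) (Real.log 2),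
          Real.exp_log (by norm_num : (0:ℝ) < 2)]
        norm_num

/-- Log-concave coefficient lower bound: if `(p_j)` is positive log-concave,
`f(z) = ∑ p_j z^j` is entire and `lim_{r→∞} ln f(r)/(ln r)² = β ∈ (0,∞)`, then
`liminf_{j→∞} (ln p_j)/j² ≥ -1/(4β)`. -/
theorem coeff_lower_bound (p : ℕ → ℝ) (hp : ∀ j, 0 < p j)
    (hlc : ∀ j : ℕ, 1 ≤ j → p (j - 1) * p (j + 1) ≤ (p j) ^ 2)
    (hent : ∀ r : ℝ, 0 < r → Summable (fun j : ℕ => p j * r ^ j))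
    (β : ℝ) (hβ : 0 < β)
    (hlim : Tendsto (fun r : ℝ => Real.log (∑' j : ℕ, p j * r ^ j) / (Real.log r) ^ 2)
      atTop (nhds β)) :
    -1 / (4 * β) ≤ liminf (fun j : ℕ => Real.log (p j) / (j : ℝ) ^ 2) atTop := by
  set q : ℕ → ℝ := fun j => Real.log (p j) with hq
  -- the difference sequence is antitone (log-concavity)
  have hanti : Antitone fun m => q (m + 1) - q m := by
    apply antitone_nat_of_succ_le
    intro n
    have h := hlc (n + 1) (by omega)
    simp only [Nat.add_sub_cancel] at h
    have h1 : Real.log (p n * p (n + 2)) ≤ Real.log ((p (n + 1)) ^ 2) :=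
      Real.log_le_log (mul_pos (hp n) (hp _)) h
    rw [Real.log_mul (hp n).ne' (hp _).ne', Real.log_pow] at h1
    show q (n + 1 + 1) - q (n + 1) ≤ q (n + 1) - q n
    simp only [hq]
    push_cast at h1
    linarith
  -- the difference sequence tends to -∞
  have hdbot : Tendsto (fun m => q (m + 1) - q m) atTop atBot := by
    rw [tendsto_atBot]
    intro b
    have hex : ∃ m, q (m + 1) - q m < b := by
      by_contra hcon
      push_neg at hcon
      have hqk : ∀ k : ℕ, q 0 + k * b ≤ q k := by
        intro k
        induction k with
        | zero => simp
        | succ k ih =>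
          have := hcon k
          push_cast
          linarith
      have hsum := (hent (Real.exp (1 - b)) (Real.exp_pos _)).tendsto_atTop_zero
      have hterm : ∀ k : ℕ, Real.exp (q 0) ≤ p k * Real.exp (1 - b) ^ k := by
        intro k
        have h1 : p k * Real.exp (1 - b) ^ k = Real.exp (q k + (k : ℝ) * (1 - b)) := by
          rw [Real.exp_add, ← Real.exp_nat_mul]
          simp only [hq]
          rw [Real.exp_log (hp k)]
        rw [h1]
        apply Real.exp_le_exp.2
        have h2 := hqk k
        have hk : (0 : ℝ) ≤ (k : ℝ) := Nat.cast_nonneg k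
        nlinarith
      have hev := hsum.eventually (gt_mem_nhds (Real.exp_pos (q 0)))
      rw [eventually_atTop] at hev
      obtain ⟨N, hN⟩ := hev
      exact absurd (hterm N) (not_le.2 (hN N le_rfl))
    obtain ⟨m0, hm0⟩ := hex
    exact eventually_atTop.2 ⟨m0, fun m hm => le_trans (hanti hm) hm0.le⟩
  -- main argument by contradiction
  by_contra hcon
  push_neg at hcon
  obtain ⟨a, ha1, ha2⟩ := exists_between hcon
  -- choose c with 0 < c < β and a < -1/(4c)
  have hneg : -1 / (4 * β) = -(1 / (4 * β)) := by ring
  have hna : 1 / (4 * β) < -a := by rw [hneg] at ha2; linarith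
  have hma : (0 : ℝ) < -a := lt_trans (by positivity) hna
  have hkey : 1 < 4 * β * (-a) := by
    rw [div_lt_iff₀ (by positivity)] at hna; linarith
  set c : ℝ := (1 / (4 * (-a)) + β) / 2 with hc
  have hfa : (0 : ℝ) < 1 / (4 * (-a)) := by positivity
  have h14 : 1 / (4 * (-a)) < β := by
    rw [div_lt_iff₀ (by positivity)]; nlinarith
  have hc0 : 0 < c := by rw [hc]; linarith
  have hcβ : c < β := by rw [hc]; linarith
  have hca : a < -1 / (4 * c) := by
    have ha0 : -a ≠ 0 := ne_of_gt hma
    have hinv : (-a) * (1 / (4 * (-a))) = 1 / 4 := by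
      rw [mul_one_div, mul_comm 4 (-a), ← div_div, div_self ha0]
    have hexp2 : (-a) * (4 * c) = 2 * ((-a) * (1 / (4 * (-a)))) + 2 * ((-a) * β) := by
      rw [hc]; ring
    have h4c : 1 < (-a) * (4 * c) := by
      rw [hexp2, hinv]; nlinarith
    have h5 : 1 / (4 * c) < -a := by
      rw [div_lt_iff₀ (by positivity)]; linarith
    have hneg2 : -1 / (4 * c) = -(1 / (4 * c)) := by ring
    rw [hneg2]; linarith
  clear_value c
  -- from hlim: eventually log f r > c (log r)^2
  have hev := hlim.eventually_const_lt hcβ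
  rw [eventually_atTop] at hev
  obtain ⟨R, hR⟩ := hev
  set R' : ℝ := max R 1 with hR'
  -- the error term vanishes
  have hvanish : Tendsto (fun j : ℕ => -1 / (4 * c) - ((j : ℝ) + 1) * Real.log 2 / (j : ℝ) ^ 2)
      atTop (nhds (-1 / (4 * c))) := by
    have h1 : Tendsto (fun j : ℕ => 1 / (j : ℝ)) atTop (nhds 0) :=
      tendsto_one_div_atTop_nhds_zero_nat
    have h0 : Tendsto (fun j : ℕ => ((j : ℝ) + 1) * Real.log 2 / (j : ℝ) ^ 2) atTop (nhds 0) := by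
      have heq : ∀ᶠ j : ℕ in atTop, ((j : ℝ) + 1) * Real.log 2 / (j : ℝ) ^ 2
          = Real.log 2 * (1 / (j : ℝ)) + Real.log 2 * (1 / (j : ℝ) * (1 / (j : ℝ))) := by
        filter_upwards [eventually_ge_atTop 1] with j hj
        have hj0 : (j : ℝ) ≠ 0 := by
          have : (1 : ℝ) ≤ (j : ℝ) := by exact_mod_cast hj
          linarith
        field_simp
      rw [tendsto_congr' heq]
      have := (h1.const_mul (Real.log 2)).add ((h1.mul h1).const_mul (Real.log 2))
      simpa using this
    have := Tendsto.sub
      (tendsto_const_nhds : Tendsto (fun _ : ℕ => -1 / (4 * c)) atTop (nhds (-1 / (4 * c)))) h0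
    simpa using this
  have hq0 : ∀ᶠ j : ℕ in atTop, a < -1 / (4 * c) - ((j : ℝ) + 1) * Real.log 2 / (j : ℝ) ^ 2 :=
    hvanish.eventually_const_lt hca
  have hdev : ∀ᶠ j : ℕ in atTop, q (j + 1) - q j ≤ -(Real.log 2 + R' + 2) :=
    hdbot.eventually (eventually_le_atBot _)
  have hlog2 : (0 : ℝ) < Real.log 2 := Real.log_pos (by norm_num)
  -- the main pointwise estimate
  have hmain : ∀ᶠ j : ℕ in atTop, a < q j / (j : ℝ) ^ 2 := by
    filter_upwards [hq0, hdev, eventually_ge_atTop 1] with j hj0 hjd hj1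
    set s : ℝ := -(q (j + 1) - q j) with hs
    set t : ℝ := s - Real.log 2 with ht
    clear_value s t
    have hslb : Real.log 2 + R' + 2 ≤ s := by rw [hs]; linarith
    have htlb : R' + 2 ≤ t := by rw [ht]; linarith
    have hR'1 : (1 : ℝ) ≤ R' := le_max_right _ _
    have ht0 : 0 < t := by linarith
    -- maximality of the j-th term at slope s
    have hmax : ∀ i : ℕ, q i + i * s ≤ q j + j * s := by
      intro i
      rcases le_or_gt i j with hij | hij
      · obtain ⟨k, rfl⟩ := Nat.exists_eq_add_of_le hij
        have hA := telescopeA q hanti i k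
        have hds : q (i + k + 1) - q (i + k) = -s := by rw [hs]; ring
        rw [hds] at hA
        push_cast
        linarith
      · obtain ⟨k, rfl⟩ := Nat.exists_eq_add_of_le hij.le
        have hB := telescopeB q hanti j k
        have hds : q (j + 1) - q j = -s := by rw [hs]; ring
        rw [hds] at hB
        push_cast
        linarith
    -- lower bound for the sum
    have hrR : R ≤ Real.exp t := by
      have h2 := Real.add_one_le_exp t
      have h3 : R ≤ R' := le_max_left _ _
      linarith
    have hf := hR (Real.exp t) hrR
    rw [Real.log_exp] at hf
    have hflb : c * t ^ 2 < Real.log (∑' i : ℕ, p i * Real.exp t ^ i) := by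
      rw [lt_div_iff₀ (by positivity)] at hf
      linarith
    -- upper bound for the sum
    have hfsum := hent (Real.exp t) (Real.exp_pos _)
    have hmax' : ∀ i : ℕ, Real.log (p i) + i * s ≤ Real.log (p j) + j * s := by
      intro i; have := hmax i; simpa only [hq] using this
    have hsum' : Summable fun i : ℕ => p i * Real.exp (s - Real.log 2) ^ i := by
      rw [← ht]; exact hfsum
    have hle2 := sum_le_twice_max p hp j s hsum' hmax'
    rw [← ht] at hle2
    have hpos : 0 < ∑' i : ℕ, p i * Real.exp t ^ i :=
      Summable.tsum_pos hfsum (fun i => (mul_pos (hp i) (pow_pos (Real.exp_pos t) i)).le) 0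
        (mul_pos (hp 0) (pow_pos (Real.exp_pos t) 0))
    have hfub : Real.log (∑' i : ℕ, p i * Real.exp t ^ i)
        ≤ q j + (j : ℝ) * s + Real.log 2 := by
      rw [Real.log_le_iff_le_exp hpos]
      exact hle2
    -- combine
    have hcomb : c * (s - Real.log 2) ^ 2 - (j : ℝ) * s - Real.log 2 < q j := by
      rw [← ht]
      linarith
    have h4c0 : (0 : ℝ) < 4 * c := by linarith
    have hquad0 : -(j : ℝ) ^ 2 / (4 * c)
        ≤ c * (s - Real.log 2) ^ 2 - (j : ℝ) * (s - Real.log 2) :=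
      quad_bound c (s - Real.log 2) (j : ℝ) hc0
    have hquad : -(j : ℝ) ^ 2 / (4 * c) - ((j : ℝ) + 1) * Real.log 2 < q j := by
      linarith [hquad0, hcomb]
    have hj0' : (0 : ℝ) < (j : ℝ) ^ 2 := by
      have : (1 : ℝ) ≤ (j : ℝ) := by exact_mod_cast hj1
      positivity
    have heq2 : -1 / (4 * c) - ((j : ℝ) + 1) * Real.log 2 / (j : ℝ) ^ 2
        = (-(j : ℝ) ^ 2 / (4 * c) - ((j : ℝ) + 1) * Real.log 2) / (j : ℝ) ^ 2 := by
      field_simp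
      try ring
    have hdivided : -1 / (4 * c) - ((j : ℝ) + 1) * Real.log 2 / (j : ℝ) ^ 2
        ≤ q j / (j : ℝ) ^ 2 := by
      rw [heq2]
      gcongr
      try exact hquad.le
    calc a < -1 / (4 * c) - ((j : ℝ) + 1) * Real.log 2 / (j : ℝ) ^ 2 := hj0
      _ ≤ q j / (j : ℝ) ^ 2 := hdivided
  -- conclude a ≤ liminf, contradiction
  have hbdd : IsCoboundedUnder (· ≥ ·) atTop (fun j : ℕ => q j / (j : ℝ) ^ 2) := by
    apply Filter.IsBoundedUnder.isCoboundedUnder_ge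
    have hp0 := (hent 1 one_pos).tendsto_atTop_zero
    simp only [one_pow, mul_one] at hp0
    have hev1 := hp0.eventually (gt_mem_nhds (by norm_num : (0:ℝ) < 1))
    refine ⟨0, ?_⟩
    rw [eventually_map]
    filter_upwards [hev1] with j hj
    have hlog : q j ≤ 0 := Real.log_nonpos (hp j).le hj.le
    exact div_nonpos_iff.2 (Or.inr ⟨hlog, sq_nonneg _⟩)
  have hle := le_liminf_of_le hbdd (hmain.mono fun j hj => hj.le)
  exact absurd (lt_of_le_of_lt hle ha1) (lt_irrefl a)
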